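/- For all non-negative integers n and p, the sum of the p-th powers of the first n positive integers satisfies Σ_{k=1}^{n} k^p = Σ_{j=0}^{p} j! · {p+1, j+1} · C(n, j+1), where {p+1, j+1} is the Stirling number of the second kind and C(n, j+1) is the binomial coefficient. -/

import Mathlib

/-- Stirling numbers of the second kind: `{n, k}` counts partitions of an
`n`-element set into `k` non-empty blocks. -/
def stirlingSecond : ℕ → ℕ → ℕ
  | 0, 0 => 1
  | 0, _ + 1 => 0
  | _ + 1, 0 => 0
  | n + 1, k + 1 => (k + 1) * stirlingSecond n (k + 1) + stirlingSecond n k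

lemma stirlingSecond_eq_zero_of_lt : ∀ {n k : ℕ}, n < k → stirlingSecond n k = 0 := by
  intro n
  induction n with
  | zero =>
    intro k h
    cases k with
    | zero => omega
    | succ k => rfl
  | succ n ih =>
    intro k h
    cases k with
    | zero => omega
    | succ k =>
      show (k + 1) * stirlingSecond n (k + 1) + stirlingSecond n k = 0
      rw [ih (by omega), ih (by omega)]
      simp

lemma succ_pow_eq (p m : ℕ) : (m + 1) ^ p =
    ∑ j ∈ Finset.range (p + 1),
      Nat.factorial j * stirlingSecond (p + 1) (j + 1) * Nat.choose m j := by
  induction p with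
  | zero => simp [stirlingSecond, Nat.factorial]
  | succ p ih =>
    have h0 : ∀ j, (m + 1) * Nat.choose m j
        = (j + 1) * (Nat.choose m j + Nat.choose m (j + 1)) := by
      intro j
      rw [Nat.add_one_mul_choose_eq, Nat.choose_succ_succ, mul_comm]
    have lhs : (m + 1) ^ (p + 1) =
        ∑ j ∈ Finset.range (p + 1),
          Nat.factorial (j + 1) * stirlingSecond (p + 1) (j + 1) *
            (Nat.choose m j + Nat.choose m (j + 1)) := by
      rw [pow_succ, ih, Finset.sum_mul]
      refine Finset.sum_congr rfl fun j _ => ?_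
      rw [mul_assoc, mul_comm (Nat.choose m j) (m + 1), h0 j, Nat.factorial_succ]
      ring
    rw [lhs]
    have rhs : ∑ j ∈ Finset.range (p + 1 + 1),
        Nat.factorial j * stirlingSecond (p + 1 + 1) (j + 1) * Nat.choose m j =
        (∑ j ∈ Finset.range (p + 1 + 1),
          Nat.factorial j * ((j + 1) * stirlingSecond (p + 1) (j + 1)) * Nat.choose m j)
        + ∑ j ∈ Finset.range (p + 1 + 1),
          Nat.factorial j * stirlingSecond (p + 1) j * Nat.choose m j := by
      rw [← Finset.sum_add_distrib]
      refine Finset.sum_congr rfl fun j _ => ?_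
      show Nat.factorial j * ((j + 1) * stirlingSecond (p + 1) (j + 1) + stirlingSecond (p + 1) j)
          * Nat.choose m j = _
      ring
    rw [rhs]
    have hA : ∑ j ∈ Finset.range (p + 1 + 1),
        Nat.factorial j * ((j + 1) * stirlingSecond (p + 1) (j + 1)) * Nat.choose m j =
        ∑ j ∈ Finset.range (p + 1),
          Nat.factorial (j + 1) * stirlingSecond (p + 1) (j + 1) * Nat.choose m j := by
      rw [Finset.sum_range_succ, stirlingSecond_eq_zero_of_lt (by omega)]
      simp only [mul_zero, zero_mul, add_zero]
      refine Finset.sum_congr rfl fun j _ => ?_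
      rw [Nat.factorial_succ]
      ring
    have hB : ∑ j ∈ Finset.range (p + 1 + 1),
        Nat.factorial j * stirlingSecond (p + 1) j * Nat.choose m j =
        ∑ j ∈ Finset.range (p + 1),
          Nat.factorial (j + 1) * stirlingSecond (p + 1) (j + 1) * Nat.choose m (j + 1) := by
      rw [Finset.sum_range_succ']
      show _ + Nat.factorial 0 * stirlingSecond (p + 1) 0 * Nat.choose m 0 = _
      simp [stirlingSecond]
    rw [hA, hB, ← Finset.sum_add_distrib]
    refine Finset.sum_congr rfl fun j _ => ?_
    ring

theorem sum_powers_eq_sum_stirlingSecond_choose (n p : ℕ) :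
    ∑ k ∈ Finset.Icc 1 n, k ^ p =
      ∑ j ∈ Finset.range (p + 1),
        Nat.factorial j * stirlingSecond (p + 1) (j + 1) * Nat.choose n (j + 1) := by
  induction n with
  | zero => simp
  | succ n ih =>
    rw [Finset.sum_Icc_succ_top (by omega), ih, succ_pow_eq p n, ← Finset.sum_add_distrib]
    refine Finset.sum_congr rfl fun j _ => ?_
    rw [Nat.choose_succ_succ (n) (j), mul_add]  -- choose (n+1) (j+1) = choose n j + choose n (j+1)
    ring
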